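/- Let p be a real number and let ρ(p) be viewed as a matrix in Matrix (Fin 2) (Fin 2) ℂ. There exist nonnegative real numbers x₁, …, x₆ with x₁ + ⋯ + x₆ = 1 and ρ(p) = x₁·P₀ + x₂·P₁ + x₃·P₊ + x₄·P₋ + x₅·P₊ᵢ + x₆·P₋ᵢ (a convex combination of the six single-qubit stabilizer projectors) if and only if (1 − tan(π/8))/2 ≤ p ≤ (1 + tan(π/8))/2, i.e., if and only if |1 − 2p| ≤ tan(π/8). -/

import Mathlib

open Real

/-- The stabilizer projector `P₀ = |0⟩⟨0|`. -/
noncomputable def P0c : Matrix (Fin 2) (Fin 2) ℂ := !![1, 0; 0, 0]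

/-- The stabilizer projector `P₁ = |1⟩⟨1|`. -/
noncomputable def P1c : Matrix (Fin 2) (Fin 2) ℂ := !![0, 0; 0, 1]

/-- The stabilizer projector `P₊ = |+⟩⟨+|`. -/
noncomputable def Pplusc : Matrix (Fin 2) (Fin 2) ℂ := !![1/2, 1/2; 1/2, 1/2]

/-- The stabilizer projector `P₋ = |−⟩⟨−|`. -/
noncomputable def Pminusc : Matrix (Fin 2) (Fin 2) ℂ := !![1/2, -(1/2); -(1/2), 1/2]

/-- The stabilizer projector `P₊ᵢ = |+i⟩⟨+i|`. -/
noncomputable def Pplusi : Matrix (Fin 2) (Fin 2) ℂ :=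
  !![1/2, -Complex.I/2; Complex.I/2, 1/2]

/-- The stabilizer projector `P₋ᵢ = |−i⟩⟨−i|`. -/
noncomputable def Pminusi : Matrix (Fin 2) (Fin 2) ℂ :=
  !![1/2, Complex.I/2; -Complex.I/2, 1/2]

/-- The dephased magic state, viewed as a complex matrix. -/
noncomputable def ρdephc (p : ℝ) : Matrix (Fin 2) (Fin 2) ℂ :=
  !![((cos (π/8) ^ 2 : ℝ) : ℂ), (((1 - 2*p) * cos (π/8) * sin (π/8) : ℝ) : ℂ);
     (((1 - 2*p) * cos (π/8) * sin (π/8) : ℝ) : ℂ), ((sin (π/8) ^ 2 : ℝ) : ℂ)]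

theorem stmt_10 (p : ℝ) :
    (∃ x : Fin 6 → ℝ, (∀ i, 0 ≤ x i) ∧ (∑ i, x i) = 1 ∧
      ρdephc p = x 0 • P0c + x 1 • P1c + x 2 • Pplusc + x 3 • Pminusc
          + x 4 • Pplusi + x 5 • Pminusi)
    ↔ |1 - 2*p| ≤ tan (π/8) := by
  have hπ8 : (0:ℝ) < π/8 := by positivity
  have hπ8' : π/8 < π/2 := by linarith [pi_pos]
  have hs : 0 < sin (π/8) := sin_pos_of_pos_of_lt_pi hπ8 (by linarith [pi_pos])
  have hc : 0 < cos (π/8) := cos_pos_of_mem_Ioo ⟨by linarith, hπ8'⟩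
  have htan : tan (π/8) = sin (π/8) / cos (π/8) := tan_eq_sin_div_cos _
  have hpyth : sin (π/8) ^ 2 + cos (π/8) ^ 2 = 1 := sin_sq_add_cos_sq _
  constructor
  · rintro ⟨x, hx, -, h⟩
    have h01 := congrArg (fun M => (M 0 1).re) h
    have h11 := congrArg (fun M => (M 1 1).re) h
    simp only [ρdephc, P0c, P1c, Pplusc, Pminusc, Pplusi, Pminusi] at h01 h11
    simp [Matrix.add_apply, Matrix.smul_apply, Complex.real_smul, Complex.add_re,
      Complex.mul_re, Complex.I_re, Complex.I_im, Complex.div_re, Complex.ofReal_re,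
      Complex.ofReal_im, Complex.neg_re, Complex.neg_im,
      -Real.cos_pi_div_eight, -Real.sin_pi_div_eight,
      -Complex.ofReal_cos, -Complex.ofReal_sin] at h01 h11
    rw [← Complex.ofReal_pow, Complex.ofReal_re] at h11
    have habs : |(1 - 2*p) * cos (π/8) * sin (π/8)| ≤ sin (π/8) ^ 2 := by
      rw [abs_le]
      have h2 := hx 2; have h3 := hx 3; have h1 := hx 1; have h4 := hx 4; have h5 := hx 5
      constructor <;> linarith
    rw [htan, le_div_iff₀ hc]
    have h2 : |1 - 2*p| * cos (π/8) * sin (π/8) ≤ sin (π/8) ^ 2 := by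
      rwa [abs_mul, abs_mul, abs_of_pos hc, abs_of_pos hs] at habs
    nlinarith
  · intro habs
    set c := cos (π/8) with hcdef
    set s := sin (π/8) with hsdef
    set t := (1 - 2*p) * c * s with ht
    have hts : |t| ≤ s ^ 2 := by
      have h1 : |t| = |1 - 2*p| * c * s := by
        rw [ht, abs_mul, abs_mul, abs_of_pos hc, abs_of_pos hs]
      rw [h1]
      calc |1 - 2*p| * c * s ≤ (s / c) * c * s := by
            apply mul_le_mul_of_nonneg_right (mul_le_mul_of_nonneg_right (htan ▸ habs) hc.le) hs.le
        _ = s ^ 2 := by field_simp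
    have hcs : s ≤ c := by
      rw [hsdef, hcdef, ← Real.cos_pi_div_two_sub]
      exact Real.cos_le_cos_of_nonneg_of_le_pi (by positivity) (by linarith [pi_pos])
        (by linarith [pi_pos])
    set X : Fin 6 → ℝ := ![c^2 - s^2, 0, s^2 + t, s^2 - t, 0, 0] with hX
    have hX0 : X 0 = c^2 - s^2 := rfl
    have hX1 : X 1 = 0 := rfl
    have hX2 : X 2 = s^2 + t := rfl
    have hX3 : X 3 = s^2 - t := rfl
    have hX4 : X 4 = 0 := rfl
    have hX5 : X 5 = 0 := rfl
    refine ⟨X, ?_, ?_, ?_⟩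
    · intro i
      obtain ⟨h1, h2⟩ := abs_le.mp hts
      fin_cases i
      · show (0:ℝ) ≤ c^2 - s^2; nlinarith
      · show (0:ℝ) ≤ 0; exact le_rfl
      · show (0:ℝ) ≤ s^2 + t; linarith
      · show (0:ℝ) ≤ s^2 - t; linarith
      · show (0:ℝ) ≤ 0; exact le_rfl
      · show (0:ℝ) ≤ 0; exact le_rfl
    · rw [Fin.sum_univ_six, hX0, hX1, hX2, hX3, hX4, hX5]; linarith
    · simp only [ρdephc, P0c, P1c, Pplusc, Pminusc, Pplusi, Pminusi, ← hcdef, ← hsdef, ← ht,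
        hX0, hX1, hX2, hX3, hX4, hX5]
      ext i j
      fin_cases i <;> fin_cases j <;>
        simp [Matrix.add_apply, Matrix.smul_apply, Complex.real_smul,
          -Real.cos_pi_div_eight, -Real.sin_pi_div_eight,
          -Complex.ofReal_cos, -Complex.ofReal_sin] <;>
        push_cast <;> ring
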